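/- For every natural number n ≥ 1, define 𝓡ₙ = 1/n, Qₙ = 2/n − 1/n², 𝓜ₙ = 1/(2n³), and Mₙ = 𝓜ₙ + (Qₙ² − 𝓜ₙ²)/(2𝓡ₙ). Then Qₙ/(2𝓡ₙ) = 1 − 1/(2n) for every n, so each member of the sequence satisfies the strict inequality 2𝓡ₙ > Qₙ, the ratio Qₙ/(2𝓡ₙ) tends to 1 as n → ∞ (the inequality 2𝓡 > |Q| is saturated in the limit), and moreover Qₙ → 0, 𝓡ₙ → 0, Mₙ → 0 and 𝓜ₙ → 0 as n → ∞. -/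

import Mathlib

open Filter Topology

/-- The sequence of shell radii `𝓡ₙ = 1/n`. -/
noncomputable def shellRadius (n : ℕ) : ℝ := 1 / n

/-- The sequence of shell charges `Qₙ = 2/n − 1/n²`. -/
noncomputable def shellCharge (n : ℕ) : ℝ := 2 / n - 1 / (n : ℝ) ^ 2

/-- The sequence of shell proper masses `𝓜ₙ = 1/(2n³)`. -/
noncomputable def shellProperMass (n : ℕ) : ℝ := 1 / (2 * (n : ℝ) ^ 3)

/-- The sequence of total (ADM) masses `Mₙ = 𝓜ₙ + (Qₙ² − 𝓜ₙ²)/(2𝓡ₙ)`. -/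
noncomputable def shellMass (n : ℕ) : ℝ :=
  shellProperMass n +
    (shellCharge n ^ 2 - shellProperMass n ^ 2) / (2 * shellRadius n)

/-- for the sequence of thin shells with `𝓡ₙ = 1/n`,
`Qₙ = 2/n − 1/n²`, `𝓜ₙ = 1/(2n³)`, the ratio satisfies
`Qₙ/(2𝓡ₙ) = 1 − 1/(2n)`, each member satisfies the strict inequality
`2𝓡ₙ > Qₙ`, the ratio `Qₙ/(2𝓡ₙ)` tends to `1` (the size–charge inequality
is saturated in the limit), and `Qₙ → 0`, `𝓡ₙ → 0`, `Mₙ → 0`, `𝓜ₙ → 0`. -/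
theorem thin_shell_sequence_saturates_inequality :
    (∀ n : ℕ, 1 ≤ n →
      shellCharge n / (2 * shellRadius n) = 1 - 1 / (2 * (n : ℝ)) ∧
      2 * shellRadius n > shellCharge n) ∧
    Tendsto (fun n : ℕ => shellCharge n / (2 * shellRadius n)) atTop (𝓝 1) ∧
    Tendsto shellCharge atTop (𝓝 0) ∧
    Tendsto shellRadius atTop (𝓝 0) ∧
    Tendsto shellMass atTop (𝓝 0) ∧
    Tendsto shellProperMass atTop (𝓝 0) := by

  have hx : Tendsto (fun n : ℕ => (1:ℝ) / n) atTop (𝓝 0) :=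
    tendsto_one_div_atTop_nhds_zero_nat
  have hev : ∀ᶠ n : ℕ in atTop, 1 ≤ n := eventually_ge_atTop 1
  have key : ∀ n : ℕ, 1 ≤ n →
      shellCharge n / (2 * shellRadius n) = 1 - 1 / (2 * (n : ℝ)) := by
    intro n hn
    have h0 : (n : ℝ) ≠ 0 := Nat.cast_ne_zero.mpr (by omega)
    simp only [shellCharge, shellRadius]
    field_simp
  refine ⟨fun n hn => ⟨key n hn, ?_⟩, ?_, ?_, ?_, ?_, ?_⟩
  · have h0 : (0:ℝ) < (n : ℝ) := by exact_mod_cast hn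
    have : (0:ℝ) < 1 / (n:ℝ)^2 := by positivity
    simp only [shellCharge, shellRadius]
    have h2 : 2 * (1 / (n:ℝ)) = 2 / n := by ring
    linarith
  · have : Tendsto (fun n : ℕ => 1 - (1/2) * (1 / (n:ℝ))) atTop (𝓝 (1 - (1/2) * 0)) :=
      (tendsto_const_nhds.sub (hx.const_mul _))
    rw [show (1:ℝ) = 1 - (1/2) * 0 by ring]
    refine this.congr' ?_
    filter_upwards [hev] with n hn
    rw [key n hn]; ring
  · have : Tendsto (fun n : ℕ => 2 * (1 / (n:ℝ)) - (1 / (n:ℝ))^2) atTop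
        (𝓝 (2 * 0 - 0^2)) := ((hx.const_mul _).sub (hx.pow 2))
    rw [show (0:ℝ) = 2 * 0 - 0^2 by ring]
    refine this.congr fun n => ?_
    simp only [shellCharge]
    ring
  · exact hx
  · have : Tendsto (fun n : ℕ => 2 * (1/(n:ℝ)) - 2 * (1/(n:ℝ))^2 + (1/(n:ℝ))^3
        - (1/8) * (1/(n:ℝ))^5) atTop (𝓝 (2 * 0 - 2 * 0^2 + 0^3 - (1/8) * 0^5)) := by
      exact (((hx.const_mul _).sub ((hx.pow 2).const_mul _)).add (hx.pow 3)).sub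
        ((hx.pow 5).const_mul _)
    rw [show (0:ℝ) = 2 * 0 - 2 * 0^2 + 0^3 - (1/8) * 0^5 by ring]
    refine this.congr' ?_
    filter_upwards [hev] with n hn
    have h0 : (n : ℝ) ≠ 0 := Nat.cast_ne_zero.mpr (by omega)
    simp only [shellMass, shellCharge, shellRadius, shellProperMass]
    field_simp
    ring
  · have : Tendsto (fun n : ℕ => (1/2) * (1/(n:ℝ))^3) atTop (𝓝 ((1/2) * 0^3)) :=
      (hx.pow 3).const_mul _
    have h2 : ((1:ℝ)/2) * 0^3 = 0 := by ring
    rw [h2] at this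
    refine this.congr fun n => ?_
    simp only [shellProperMass]
    ring
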